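/- Let f(n) be the number of functions c : Fin n → {Empty, Blue, Red} such that no two indices i and i+2 are both non-Empty. Then f(0)=1, f(1)=3, f(2)=9, f(3)=15, and for all n ≥ 4, f(n) = f(n-1) + 2·f(n-3) + 4·f(n-4). -/

import Mathlib

inductive Color : Type
  | Empty | Blue | Red
  deriving DecidableEq

instance : Fintype Color :=
  ⟨{Color.Empty, Color.Blue, Color.Red}, fun x => by cases x <;> simp⟩

/-- Number of Cis₂ positions on the path `P_n`: colorings where no two indices
at distance exactly 2 are both non-`Empty`. -/
def cis2Path (n : ℕ) : ℕ :=
  Fintype.card {c : Fin n → Color //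
    ∀ i j : Fin n, (j : ℕ) = (i : ℕ) + 2 →
      ¬(c i ≠ Color.Empty ∧ c j ≠ Color.Empty)}

namespace Cis2Aux

abbrev Valid {n : ℕ} (c : Fin n → Color) : Prop :=
  ∀ i j : Fin n, (j : ℕ) = (i : ℕ) + 2 →
    ¬(c i ≠ Color.Empty ∧ c j ≠ Color.Empty)

lemma cis2_eq (n : ℕ) : cis2Path n = Fintype.card {c : Fin n → Color // Valid c} :=
  Fintype.card_congr (Equiv.subtypeEquivRight fun _ => Iff.rfl)

lemma sumColor (f : Color → ℕ) : ∑ y, f y = f .Empty + f .Blue + f .Red := by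
  rw [show (Finset.univ : Finset Color) = {.Empty, .Blue, .Red} from rfl]
  rw [Finset.sum_insert (by decide), Finset.sum_insert (by decide), Finset.sum_singleton]
  omega

def snocEquiv {n : ℕ} (P : (Fin (n+1) → Color) → Prop) :
    {c : Fin (n+1) → Color // P c} ≃ {p : (Fin n → Color) × Color // P (Fin.snoc p.1 p.2)} where
  toFun c := ⟨(Fin.init c.1, c.1 (Fin.last n)), by rw [Fin.snoc_init_self]; exact c.2⟩
  invFun p := ⟨Fin.snoc p.1.1 p.1.2, p.2⟩
  left_inv c := Subtype.ext (Fin.snoc_init_self c.1)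
  right_inv p := Subtype.ext (by simp)

def fiberEquiv {α : Type*} (P : α × Color → Prop) :
    {p : α × Color // P p} ≃ Σ y : Color, {d : α // P (d, y)} where
  toFun p := ⟨p.1.2, ⟨p.1.1, p.2⟩⟩
  invFun q := ⟨(q.2.1, q.1), q.2.2⟩
  left_inv p := rfl
  right_inv := by rintro ⟨y, d, h⟩; rfl

def prodFixEquiv {α : Type*} (P : α × Color → Prop) (y : Color) :
    {p : α × Color // P p ∧ p.2 = y} ≃ {d : α // P (d, y)} where
  toFun p := ⟨p.1.1, by obtain ⟨⟨d, z⟩, h, rfl⟩ := p; exact h⟩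
  invFun d := ⟨(d.1, y), d.2, rfl⟩
  left_inv := by rintro ⟨⟨d, z⟩, h, rfl⟩; rfl
  right_inv d := rfl

lemma card_snoc_sum (n : ℕ) (P : (Fin (n+1) → Color) → Prop) [DecidablePred P] :
    Fintype.card {c : Fin (n+1) → Color // P c}
      = ∑ y : Color, Fintype.card {d : Fin n → Color // P (Fin.snoc d y)} := by
  calc Fintype.card {c : Fin (n+1) → Color // P c}
      = Fintype.card (Σ y : Color, {d : Fin n → Color // P (Fin.snoc d y)}) :=
        Fintype.card_congr ((snocEquiv P).trans (fiberEquiv _))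
    _ = ∑ y : Color, Fintype.card {d : Fin n → Color // P (Fin.snoc d y)} :=
        Fintype.card_sigma

lemma card_snoc_fix (n : ℕ) (P : (Fin (n+1) → Color) → Prop) [DecidablePred P] (y : Color) :
    Fintype.card {c : Fin (n+1) → Color // P c ∧ c (Fin.last n) = y}
      = Fintype.card {d : Fin n → Color // P (Fin.snoc d y)} :=
  Fintype.card_congr ((snocEquiv _).trans
    ((Equiv.subtypeEquivRight (fun p => by rw [Fin.snoc_last])).trans
      (prodFixEquiv (fun p => P (Fin.snoc p.1 p.2)) y)))

lemma valid_snoc {n : ℕ} (d : Fin n → Color) (y : Color) :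
    Valid (Fin.snoc d y) ↔ Valid d ∧ (y ≠ Color.Empty →
      ∀ i : Fin n, (i : ℕ) + 2 = n → d i = Color.Empty) := by
  constructor
  · intro h
    refine ⟨fun i j hij => ?_, fun hy i hi => ?_⟩
    · have := h i.castSucc j.castSucc (by simpa using hij)
      simpa using this
    · by_contra hd
      exact h i.castSucc (Fin.last n) (by simp; omega)
        ⟨by rw [Fin.snoc_castSucc]; exact hd, by rw [Fin.snoc_last]; exact hy⟩
  · rintro ⟨hd, hy⟩ i j hij
    rcases Fin.eq_castSucc_or_eq_last j with ⟨j', rfl⟩ | rfl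
    · rcases Fin.eq_castSucc_or_eq_last i with ⟨i', rfl⟩ | rfl
      · simp only [Fin.snoc_castSucc]
        exact hd i' j' (by simpa using hij)
      · exfalso
        have h1 := j'.isLt
        simp at hij
        omega
    · rcases Fin.eq_castSucc_or_eq_last i with ⟨i', rfl⟩ | rfl
      · simp only [Fin.snoc_castSucc, Fin.snoc_last]
        rintro ⟨h1, h2⟩
        have hi' : (i' : ℕ) + 2 = n := by simp at hij; omega
        exact h1 (hy h2 i' hi')
      · exfalso
        simp at hij

lemma forced_iff {n : ℕ} (d : Fin n → Color) (k : Fin n) (hk : (k : ℕ) + 2 = n) :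
    (∀ i : Fin n, (i : ℕ) + 2 = n → d i = Color.Empty) ↔ d k = Color.Empty := by
  constructor
  · exact fun h => h k hk
  · intro h i hi
    have : i = k := Fin.ext (by omega)
    rwa [this]

def Bc (m : ℕ) : ℕ :=
  Fintype.card {e : Fin (m+2) → Color // Valid e ∧ e ((Fin.last m).castSucc) = Color.Empty}

def Kc (m : ℕ) (x y : Color) : ℕ :=
  Fintype.card {e : Fin (m+2) → Color // Valid e ∧
    (x ≠ Color.Empty → e ((Fin.last m).castSucc) = Color.Empty) ∧
    (y ≠ Color.Empty → e (Fin.last (m+1)) = Color.Empty)}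

lemma cis2_sum (n : ℕ) :
    cis2Path (n+1) = ∑ y : Color, Fintype.card {d : Fin n → Color // Valid (Fin.snoc d y)} :=
  (cis2_eq (n+1)).trans (card_snoc_sum n _)

lemma step2 (m : ℕ) : cis2Path (m+3) = cis2Path (m+2) + 2 * Bc m := by
  have h : cis2Path (m+3)
      = ∑ y : Color, Fintype.card {d : Fin (m+2) → Color // Valid (Fin.snoc d y)} :=
    cis2_sum (m+2)
  rw [h, sumColor]
  have hE : Fintype.card {d : Fin (m+2) → Color // Valid (Fin.snoc d Color.Empty)}
      = cis2Path (m+2) := by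
    rw [cis2_eq (m+2)]
    exact Fintype.card_congr (Equiv.subtypeEquivRight fun d => by simp [valid_snoc])
  have hne : ∀ y : Color, y ≠ Color.Empty →
      Fintype.card {d : Fin (m+2) → Color // Valid (Fin.snoc d y)} = Bc m := fun y hy =>
    Fintype.card_congr (Equiv.subtypeEquivRight fun d => by
      rw [valid_snoc, forced_iff d ((Fin.last m).castSucc)
        (by simp only [Fin.coe_castSucc, Fin.val_last])]
      simp [hy])
  rw [hE, hne _ (by decide), hne _ (by decide)]
  omega

lemma step1 (m : ℕ) : cis2Path (m+4) = ∑ y : Color, ∑ x : Color, Kc m x y := by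
  have h : cis2Path (m+4)
      = ∑ y : Color, Fintype.card {p : Fin (m+3) → Color // Valid (Fin.snoc p y)} :=
    cis2_sum (m+3)
  rw [h]
  refine Finset.sum_congr rfl fun y _ => ?_
  calc Fintype.card {p : Fin (m+3) → Color // Valid (Fin.snoc p y)}
      = Fintype.card {p : Fin (m+3) → Color // Valid p ∧
          (y ≠ Color.Empty → p ((Fin.last (m+1)).castSucc) = Color.Empty)} :=
        Fintype.card_congr (Equiv.subtypeEquivRight fun p => by
          rw [valid_snoc, forced_iff p ((Fin.last (m+1)).castSucc)
            (by simp only [Fin.coe_castSucc, Fin.val_last])])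
    _ = ∑ x : Color, Fintype.card {e : Fin (m+2) → Color // Valid (Fin.snoc e x) ∧
          (y ≠ Color.Empty → (Fin.snoc e x : Fin (m+3) → Color) ((Fin.last (m+1)).castSucc) = Color.Empty)} :=
        card_snoc_sum (m+2) _
    _ = ∑ x : Color, Kc m x y := Finset.sum_congr rfl fun x _ =>
        Fintype.card_congr (Equiv.subtypeEquivRight fun e => by
          rw [Fin.snoc_castSucc, valid_snoc, forced_iff e ((Fin.last m).castSucc)
            (by simp only [Fin.coe_castSucc, Fin.val_last])]
          tauto)

lemma KEE (m : ℕ) : Kc m Color.Empty Color.Empty = cis2Path (m+2) := by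
  rw [cis2_eq (m+2)]
  exact Fintype.card_congr (Equiv.subtypeEquivRight fun e => by simp)

lemma KxE (m : ℕ) (x : Color) (hx : x ≠ Color.Empty) : Kc m x Color.Empty = Bc m :=
  Fintype.card_congr (Equiv.subtypeEquivRight fun e => by simp [hx])

lemma KEy (m : ℕ) (y : Color) (hy : y ≠ Color.Empty) : Kc m Color.Empty y = cis2Path (m+1) := by
  calc Kc m Color.Empty y
      = Fintype.card {e : Fin (m+2) → Color // Valid e ∧ e (Fin.last (m+1)) = Color.Empty} :=
        Fintype.card_congr (Equiv.subtypeEquivRight fun e => by simp [hy])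
    _ = Fintype.card {d : Fin (m+1) → Color // Valid (Fin.snoc d Color.Empty)} :=
        card_snoc_fix (m+1) Valid Color.Empty
    _ = cis2Path (m+1) := by
        rw [cis2_eq (m+1)]
        exact Fintype.card_congr (Equiv.subtypeEquivRight fun d => by simp [valid_snoc])

lemma Kxy (m : ℕ) (x y : Color) (hx : x ≠ Color.Empty) (hy : y ≠ Color.Empty) :
    Kc m x y = cis2Path m := by
  calc Kc m x y
      = Fintype.card {e : Fin (m+2) → Color //
          (Valid e ∧ e ((Fin.last m).castSucc) = Color.Empty) ∧ e (Fin.last (m+1)) = Color.Empty} :=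
        Fintype.card_congr (Equiv.subtypeEquivRight fun e => by simp [hx, hy]; tauto)
    _ = Fintype.card {d : Fin (m+1) → Color // Valid (Fin.snoc d Color.Empty) ∧
          (Fin.snoc d Color.Empty : Fin (m+2) → Color) ((Fin.last m).castSucc) = Color.Empty} :=
        card_snoc_fix (m+1) (fun c => Valid c ∧ c ((Fin.last m).castSucc) = Color.Empty)
          Color.Empty
    _ = Fintype.card {d : Fin (m+1) → Color // Valid d ∧ d (Fin.last m) = Color.Empty} :=
        Fintype.card_congr (Equiv.subtypeEquivRight fun d => by
          rw [Fin.snoc_castSucc, valid_snoc]; simp)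
    _ = Fintype.card {e : Fin m → Color // Valid (Fin.snoc e Color.Empty)} :=
        card_snoc_fix m Valid Color.Empty
    _ = cis2Path m := by
        rw [cis2_eq m]
        exact Fintype.card_congr (Equiv.subtypeEquivRight fun e => by simp [valid_snoc])

lemma main (m : ℕ) :
    cis2Path (m+4) = cis2Path (m+3) + 2 * cis2Path (m+1) + 4 * cis2Path m := by
  have h := step1 m
  rw [sumColor] at h
  rw [sumColor (fun x => Kc m x Color.Empty), sumColor (fun x => Kc m x Color.Blue),
    sumColor (fun x => Kc m x Color.Red)] at h
  rw [KEE, KxE m Color.Blue (by decide), KxE m Color.Red (by decide),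
    KEy m Color.Blue (by decide), KEy m Color.Red (by decide),
    Kxy m Color.Blue Color.Blue (by decide) (by decide),
    Kxy m Color.Red Color.Blue (by decide) (by decide),
    Kxy m Color.Blue Color.Red (by decide) (by decide),
    Kxy m Color.Red Color.Red (by decide) (by decide)] at h
  have h2 := step2 m
  omega

end Cis2Aux

theorem cis2Path_recursion :
    cis2Path 0 = 1 ∧ cis2Path 1 = 3 ∧ cis2Path 2 = 9 ∧ cis2Path 3 = 15 ∧
    ∀ n : ℕ, 4 ≤ n →
      cis2Path n = cis2Path (n - 1) + 2 * cis2Path (n - 3) + 4 * cis2Path (n - 4) := by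
  refine ⟨by decide, by decide, by decide, by decide, ?_⟩
  intro n hn
  obtain ⟨m, rfl⟩ : ∃ m, n = m + 4 := ⟨n - 4, by omega⟩
  have h1 : m + 4 - 1 = m + 3 := by omega
  have h3 : m + 4 - 3 = m + 1 := by omega
  have h4 : m + 4 - 4 = m := by omega
  rw [h1, h3, h4]
  exact Cis2Aux.main m
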